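/- Let H1, H2 be Hilbert spaces and B : H1 × H2 → ℂ a bounded bilinear form that is coercive in the sense that there exists λ > 0 with sup_{w ∈ H1, w ≠ 0} |B(w,v)|/‖w‖ ≥ λ‖v‖ for all v ∈ H2 and sup_{w ∈ H2, w ≠ 0} |B(u,w)|/‖w‖ ≥ λ‖u‖ for all u ∈ H1. Then for every bounded linear functional T on H1 there exists a unique u_T ∈ H2 such that B(v, u_T) = conj(T(v)) for all v ∈ H1, and moreover ‖u_T‖_{H2} ≤ (1/λ)‖T‖. -/

import Mathlib

open InnerProductSpace

local notation "⟪" x ", " y "⟫" => @inner ℂ _ _ x y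

/-- The Riesz representative of the functional `v ↦ conj (B v u)`. -/
noncomputable def blmA
    {H1 : Type*} [NormedAddCommGroup H1] [InnerProductSpace ℂ H1] [CompleteSpace H1]
    {H2 : Type*} [NormedAddCommGroup H2] [InnerProductSpace ℂ H2]
    (B : H1 →ₗ⋆[ℂ] H2 →ₗ[ℂ] ℂ) (Cb : ℝ)
    (hCb : ∀ (u : H1) (v : H2), ‖B u v‖ ≤ Cb * ‖u‖ * ‖v‖) (u : H2) : H1 :=
  (InnerProductSpace.toDual ℂ H1).symm <| LinearMap.mkContinuous
    { toFun := fun v => (starRingEnd ℂ) (B v u)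
      map_add' := by intro v w; simp
      map_smul' := by intro c v; simp [B.map_smulₛₗ] }
    (Cb * ‖u‖) (fun v => by
      simpa [mul_comm, mul_left_comm, mul_assoc] using hCb v u)

theorem blmA_inner
    {H1 : Type*} [NormedAddCommGroup H1] [InnerProductSpace ℂ H1] [CompleteSpace H1]
    {H2 : Type*} [NormedAddCommGroup H2] [InnerProductSpace ℂ H2]
    (B : H1 →ₗ⋆[ℂ] H2 →ₗ[ℂ] ℂ) (Cb : ℝ)
    (hCb : ∀ (u : H1) (v : H2), ‖B u v‖ ≤ Cb * ‖u‖ * ‖v‖) (u : H2) (v : H1) :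
    ⟪v, blmA B Cb hCb u⟫ = B v u := by
  have h : ⟪blmA B Cb hCb u, v⟫ = (starRingEnd ℂ) (B v u) := by
    simpa [blmA] using
      (InnerProductSpace.toDual_symm_apply (𝕜 := ℂ) (E := H1)
        (x := v) (y := LinearMap.mkContinuous
          { toFun := fun v => (starRingEnd ℂ) (B v u)
            map_add' := by intro v w; simp
            map_smul' := by intro c v; simp [B.map_smulₛₗ] }
          (Cb * ‖u‖) (fun v => by
            simpa [mul_comm, mul_left_comm, mul_assoc] using hCb v u)))
  calc ⟪v, blmA B Cb hCb u⟫ = (starRingEnd ℂ) ⟪blmA B Cb hCb u, v⟫ := by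
        rw [inner_conj_symm]
    _ = B v u := by rw [h]; exact Complex.conj_conj _

theorem babuska_lax_milgram
    {H1 : Type*} [NormedAddCommGroup H1] [InnerProductSpace ℂ H1] [CompleteSpace H1]
    {H2 : Type*} [NormedAddCommGroup H2] [InnerProductSpace ℂ H2] [CompleteSpace H2]
    (B : H1 →ₗ⋆[ℂ] H2 →ₗ[ℂ] ℂ) (Cb lam : ℝ)
    (hCb : ∀ (u : H1) (v : H2), ‖B u v‖ ≤ Cb * ‖u‖ * ‖v‖)
    (hlam : 0 < lam)
    (hcoer1 : ∀ v : H2, lam * ‖v‖ ≤ ⨆ w : {w : H1 // w ≠ 0}, ‖B w.1 v‖ / ‖w.1‖)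
    (hcoer2 : ∀ u : H1, lam * ‖u‖ ≤ ⨆ w : {w : H2 // w ≠ 0}, ‖B u w.1‖ / ‖w.1‖)
    (T : H1 →L[ℂ] ℂ) :
    (∃! u : H2, ∀ v : H1, B v u = (starRingEnd ℂ) (T v)) ∧
      ∀ u : H2, (∀ v : H1, B v u = (starRingEnd ℂ) (T v)) → ‖u‖ ≤ (1 / lam) * ‖T‖ := by
  classical
  set A : H2 → H1 := blmA B Cb hCb with hAdef
  have hA : ∀ (u : H2) (v : H1), ⟪v, A u⟫ = B v u := fun u v => blmA_inner B Cb hCb u v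
  -- linearity of A
  have hAadd : ∀ u u', A (u + u') = A u + A u' := by
    intro u u'
    refine ext_inner_left ℂ fun v => ?_
    rw [hA, inner_add_right, hA, hA, map_add]
  have hAsmul : ∀ (c : ℂ) u, A (c • u) = c • A u := by
    intro c u
    refine ext_inner_left ℂ fun v => ?_
    rw [hA, inner_smul_right, hA, map_smul, smul_eq_mul]
  -- lower bound: lam * ‖u‖ ≤ ‖A u‖
  have hlow : ∀ u : H2, lam * ‖u‖ ≤ ‖A u‖ := by
    intro u
    refine (hcoer1 u).trans (Real.iSup_le (fun w => ?_) (norm_nonneg _))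
    rw [div_le_iff₀ (norm_pos_iff.mpr w.2), ← hA u w.1]
    exact (norm_inner_le_norm _ _).trans (by rw [mul_comm])
  -- upper bound: ‖A u‖ ≤ (max Cb 0) * ‖u‖
  have hup : ∀ u : H2, ‖A u‖ ≤ max Cb 0 * ‖u‖ := by
    intro u
    by_cases h0 : A u = 0
    · simp [h0]; positivity
    · have hpos : 0 < ‖A u‖ := norm_pos_iff.mpr h0
      have h1 : ‖A u‖ * ‖A u‖ ≤ (max Cb 0 * ‖u‖) * ‖A u‖ := by
        have h2 : ‖A u‖ * ‖A u‖ = Complex.re ⟪A u, A u⟫ := by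
          simpa using (inner_self_eq_norm_mul_norm (𝕜 := ℂ) (A u)).symm
        have h3 : Complex.re ⟪A u, A u⟫ ≤ ‖B (A u) u‖ := by
          rw [hA]; exact (Complex.re_le_norm _)
        have h4 : ‖B (A u) u‖ ≤ Cb * ‖A u‖ * ‖u‖ := hCb (A u) u
        have h5 : Cb * ‖A u‖ * ‖u‖ ≤ max Cb 0 * ‖A u‖ * ‖u‖ :=
          mul_le_mul_of_nonneg_right
            (mul_le_mul_of_nonneg_right (le_max_left Cb 0) (norm_nonneg _))
            (norm_nonneg _)
        nlinarith
      exact le_of_mul_le_mul_right h1 hpos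
  -- continuous linear version
  set Alin : H2 →ₗ[ℂ] H1 :=
    { toFun := A, map_add' := hAadd, map_smul' := hAsmul } with hAlin
  set Acl : H2 →L[ℂ] H1 := LinearMap.mkContinuous Alin (max Cb 0) hup with hAcl
  have hAclA : ∀ u, Acl u = A u := fun u => rfl
  -- A is antilipschitz, hence closed range
  have hanti : AntilipschitzWith ⟨lam⁻¹, by positivity⟩ Acl := by
    refine Acl.antilipschitz_of_bound (fun u => ?_)
    have := hlow u
    rw [hAclA]
    calc ‖u‖ = lam⁻¹ * (lam * ‖u‖) := by field_simp
      _ ≤ lam⁻¹ * ‖A u‖ := by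
          exact mul_le_mul_of_nonneg_left this (by positivity)
      _ = _ := by rfl
  have hclosed : IsClosed (Set.range Acl) := hanti.isClosed_range Acl.uniformContinuous
  set K : Submodule ℂ H1 := LinearMap.range (Acl : H2 →ₗ[ℂ] H1) with hK
  have hKset : (K : Set H1) = Set.range Acl := by
    ext x; simp [hK, LinearMap.mem_range]
  have hKclosed : IsClosed (K : Set H1) := hKset ▸ hclosed
  haveI : CompleteSpace K := hKclosed.completeSpace_coe
  -- orthogonal complement of K is trivial
  have horth : Kᗮ = ⊥ := by
    rw [Submodule.eq_bot_iff]
    intro x hx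
    have hzero : ∀ w : H2, B x w = 0 := by
      intro w
      have hm : ⟪A w, x⟫ = 0 :=
        (Submodule.mem_orthogonal K x).mp hx (A w) ⟨w, rfl⟩
      rw [← hA w x, ← inner_conj_symm, hm, map_zero]
    have h0 : lam * ‖x‖ ≤ 0 := by
      refine (hcoer2 x).trans (Real.iSup_le (fun w => ?_) le_rfl)
      rw [hzero w.1]; simp
    have hx0 : ‖x‖ ≤ 0 := by nlinarith [norm_nonneg x]
    exact norm_le_zero_iff.mp hx0
  have hKtop : K = ⊤ := Submodule.orthogonal_eq_bot_iff.mp horth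
  -- Riesz representative of T
  set t : H1 := (InnerProductSpace.toDual ℂ H1).symm T with ht
  have htT : ∀ v : H1, ⟪t, v⟫ = T v := fun v =>
    InnerProductSpace.toDual_symm_apply
  have htnorm : ‖t‖ = ‖T‖ := LinearIsometryEquiv.norm_map _ T
  obtain ⟨u₀, hu₀⟩ : ∃ u, A u = t := by
    have : t ∈ K := hKtop ▸ Submodule.mem_top
    obtain ⟨u, hu⟩ := this
    exact ⟨u, hu⟩
  -- characterization
  have hchar : ∀ u : H2, (∀ v : H1, B v u = (starRingEnd ℂ) (T v)) ↔ A u = t := by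
    intro u
    constructor
    · intro h
      refine ext_inner_left ℂ fun v => ?_
      rw [hA, h v, ← htT v, inner_conj_symm]
    · intro h v
      rw [← hA, h, ← htT v, inner_conj_symm]
  refine ⟨⟨u₀, (hchar u₀).mpr hu₀, fun u hu => ?_⟩, fun u hu => ?_⟩
  · have h1 : A u = A u₀ := by rw [(hchar u).mp hu, hu₀]
    have h2 : A (u - u₀) = 0 := by
      have : A (u - u₀) = A u - A u₀ := by
        have := hAadd (u - u₀) u₀
        simp only [sub_add_cancel] at this
        rw [this]; abel
      rw [this, h1, sub_self]
    have := hlow (u - u₀)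
    rw [h2, norm_zero] at this
    have : ‖u - u₀‖ ≤ 0 := by nlinarith [norm_nonneg (u - u₀)]
    have := norm_le_zero_iff.mp this
    rwa [sub_eq_zero] at this
  · have h1 : A u = t := (hchar u).mp hu
    have := hlow u
    rw [h1, htnorm] at this
    calc ‖u‖ = lam⁻¹ * (lam * ‖u‖) := by field_simp
      _ ≤ lam⁻¹ * ‖T‖ := mul_le_mul_of_nonneg_left this (by positivity)
      _ = (1 / lam) * ‖T‖ := by rw [one_div]
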